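/- Let 1 < λ < λ*, where λ* = (√2+1)·e^{√2}, and let a be the unique fixed point of ζ_λ in (0, √2) (equivalently, a ∈ (0, √2) with (a+1)·e^a = λ). Then for every x ∈ (−∞, −1) ∪ (0, ∞), the iterates satisfy ζ_λ^n(x) → a as n → ∞. -/

import Mathlib

open Filter Topology

/-- The real function `ζ_λ(x) = λ·x·e^{−x}/(x+1)`. -/
noncomputable def zeta (lam x : ℝ) : ℝ := lam * x * Real.exp (-x) / (x + 1)

noncomputable def wfun (t : ℝ) : ℝ := t + Real.log (t + 1)

lemma zeta_pos {lam x : ℝ} (hlam : 0 < lam) (hx : 0 < x) : 0 < zeta lam x := by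
  unfold zeta
  apply div_pos _ (by linarith)
  positivity

lemma zeta_pos' {lam x : ℝ} (hlam : 0 < lam) (hx : x < -1) : 0 < zeta lam x := by
  unfold zeta
  apply div_pos_of_neg_of_neg _ (by linarith)
  have : lam * x < 0 := mul_neg_of_pos_of_neg hlam (by linarith)
  exact mul_neg_of_neg_of_pos this (Real.exp_pos _)

lemma lam_eq {lam a : ℝ} (ha : 0 < a) (hfix : zeta lam a = a) :
    lam = (a + 1) * Real.exp a := by
  unfold zeta at hfix
  have h1 : a + 1 ≠ 0 := by linarith
  have h2 : lam * a * Real.exp (-a) = a * (a + 1) := by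
    field_simp at hfix; linear_combination a * hfix
  have h3 : lam * Real.exp (-a) = a + 1 := by
    have h2' : a * (lam * Real.exp (-a)) = a * (a + 1) := by
      calc a * (lam * Real.exp (-a)) = lam * a * Real.exp (-a) := by ring
        _ = a * (a+1) := h2
    exact mul_left_cancel₀ (ne_of_gt ha) h2'
  have h4 : Real.exp (-a) * Real.exp a = 1 := by
    rw [← Real.exp_add]; simp
  calc lam = lam * (Real.exp (-a) * Real.exp a) := by rw [h4]; ring
    _ = (lam * Real.exp (-a)) * Real.exp a := by ring
    _ = (a + 1) * Real.exp a := by rw [h3]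

/-- `zeta lam x - x = x * ((a+1) e^{a-x} - (x+1)) / (x+1)` when `lam = (a+1)e^a`. -/
lemma zeta_sub_eq {lam a x : ℝ} (ha : 0 < a) (hfix : zeta lam a = a) (hx : 0 < x) :
    zeta lam x - x = x * ((a + 1) * Real.exp (a - x) - (x + 1)) / (x + 1) := by
  have hl := lam_eq ha hfix
  unfold zeta
  rw [hl, Real.exp_sub]
  have h1 : (x:ℝ) + 1 ≠ 0 := by linarith
  have h2 : Real.exp x ≠ 0 := Real.exp_ne_zero x
  have h5 : Real.exp (-x) * Real.exp x = 1 := by rw [← Real.exp_add]; simp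
  field_simp
  linear_combination ((a+1) * Real.exp a) * h5

/-- The auxiliary decreasing function. -/
lemma Daux_strictAnti {a : ℝ} (ha : 0 < a) :
    StrictAnti (fun t : ℝ => (a + 1) * Real.exp (a - t) - (t + 1)) := by
  apply strictAnti_of_deriv_neg
  intro t
  have h1 : HasDerivAt (fun t : ℝ => a - t) (-1) t := by
    simpa using (hasDerivAt_id t).const_sub a
  have h2 : HasDerivAt (fun t : ℝ => Real.exp (a - t)) (Real.exp (a - t) * (-1)) t := h1.exp
  have h3 : HasDerivAt (fun t : ℝ => (a + 1) * Real.exp (a - t) - (t + 1))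
      ((a + 1) * (Real.exp (a - t) * (-1)) - 1) t :=
    (h2.const_mul (a+1)).sub ((hasDerivAt_id t).add_const 1)
  rw [h3.deriv]
  have := Real.exp_pos (a - t)
  nlinarith

lemma lt_zeta {lam a x : ℝ} (ha : 0 < a) (hfix : zeta lam a = a)
    (hx : 0 < x) (hxa : x < a) : x < zeta lam x := by
  have h := zeta_sub_eq ha hfix hx
  have hD : (0:ℝ) < (a + 1) * Real.exp (a - x) - (x + 1) := by
    have h0 := Daux_strictAnti ha hxa
    simp only [sub_self, Real.exp_zero, mul_one] at h0
    linarith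
  have : 0 < zeta lam x - x := by
    rw [h]; positivity
  linarith

lemma zeta_lt {lam a x : ℝ} (ha : 0 < a) (hfix : zeta lam a = a)
    (hxa : a < x) : zeta lam x < x := by
  have hx : 0 < x := lt_trans ha hxa
  have h := zeta_sub_eq ha hfix hx
  have hD : (a + 1) * Real.exp (a - x) - (x + 1) < 0 := by
    have h0 := Daux_strictAnti ha hxa
    simp only [sub_self, Real.exp_zero, mul_one] at h0
    linarith
  have : zeta lam x - x < 0 := by
    rw [h]
    apply div_neg_of_neg_of_pos _ (by linarith)
    exact mul_neg_of_pos_of_neg hx hD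
  linarith

lemma le_zeta {lam a x : ℝ} (ha : 0 < a) (hfix : zeta lam a = a)
    (hx : 0 < x) (hxa : x ≤ a) : x ≤ zeta lam x := by
  rcases eq_or_lt_of_le hxa with h | h
  · subst h; rw [hfix]
  · exact le_of_lt (lt_zeta ha hfix hx h)

/-- Derivative of `zeta`. -/
lemma hasDerivAt_zeta {lam x : ℝ} (hx : x ≠ -1) :
    HasDerivAt (zeta lam) (lam * Real.exp (-x) * (1 - x - x^2) / (x + 1)^2) x := by
  have hx1 : x + 1 ≠ 0 := fun h => hx (by linarith)
  have h1 : HasDerivAt (fun t : ℝ => -t) (-1) x := by exact hasDerivAt_neg x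
  have h2 : HasDerivAt (fun t : ℝ => Real.exp (-t)) (Real.exp (-x) * (-1)) x := h1.exp
  have h3 : HasDerivAt (fun t : ℝ => lam * t) lam x := by
    simpa using (hasDerivAt_id x).const_mul lam
  have h4 := h3.mul h2
  have h5 : HasDerivAt (fun t : ℝ => t + 1) 1 x := (hasDerivAt_id x).add_const 1
  have h6 := h4.div h5 hx1
  convert h6 using 1
  case e'_4 => rfl
  case e'_5 => rfl
  case e'_8 => funext t; simp only [zeta, Pi.mul_apply, Pi.div_apply]
  case e'_9 => simp only [Pi.mul_apply]; ring

lemma continuousAt_zeta {lam x : ℝ} (hx : x ≠ -1) : ContinuousAt (zeta lam) x :=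
  (hasDerivAt_zeta hx).continuousAt

/-- Core quadratic positivity: for `0 < E < (√2+1)e^(√2-x)`, the quadratic
`x(1-x-x²)E² + (x+1)(2-x²)E + (x+2)(x+1)²` is positive. -/
lemma quad_pos' {x E : ℝ} (hx : 0 < x) (hE : 0 < E)
    (hE2 : E < (Real.sqrt 2 + 1) * Real.exp (Real.sqrt 2 - x)) :
    0 < x*(1-x-x^2)*E^2 + (x+1)*(2-x^2)*E + (x+2)*(x+1)^2 := by
  set s : ℝ := Real.sqrt 2 with hs
  have hs2 : s^2 = 2 := Real.sq_sqrt (by norm_num)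
  have hs1 : 1 < s := by
    rw [hs]; rw [show (1:ℝ) = Real.sqrt 1 by simp]
    exact Real.sqrt_lt_sqrt (by norm_num) (by norm_num)
  have hs32 : s < 3/2 := by
    rw [hs, Real.sqrt_lt' (by norm_num)]; norm_num
  rcases le_or_gt (x^2 + x) 1 with h1 | h1
  · -- increasing branch: all coefficients nonneg
    have hx1 : x < 1 := by nlinarith
    have : 0 ≤ x*(1-x-x^2) := by nlinarith
    nlinarith [sq_nonneg (x+1), mul_pos hE hE]
  · -- x > s - 1
    have hd : 0 < x + 1 - s := by nlinarith
    -- Padé bound : E * (x+1-s) < s+1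
    have hexp : x - s + 1 ≤ Real.exp (x - s) := Real.add_one_le_exp (x - s)
    have hEd : E * (x + 1 - s) < s + 1 := by
      have h3 : Real.exp (s - x) * (x + 1 - s) ≤ 1 := by
        have h4 : Real.exp (s - x) * (x - s + 1) ≤ Real.exp (s - x) * Real.exp (x - s) :=
          mul_le_mul_of_nonneg_left hexp (Real.exp_nonneg _)
        rw [← Real.exp_add] at h4
        simp only [show s - x + (x - s) = 0 by ring, Real.exp_zero] at h4
        linarith [h4]
      have h5 : E * (x + 1 - s) < (s + 1) * Real.exp (s - x) * (x + 1 - s) :=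
        mul_lt_mul_of_pos_right hE2 hd
      calc E * (x + 1 - s) < (s + 1) * (Real.exp (s - x) * (x + 1 - s)) := by
            rw [← mul_assoc]; exact h5
        _ ≤ (s + 1) * 1 := mul_le_mul_of_nonneg_left h3 (by linarith)
        _ = s + 1 := by ring
    -- polynomial nonnegativity (the tangency certificate)
    have hPoly : 0 ≤ x*(1-x-x^2)*(s+1)^2 + (x+1)*(2-x^2)*(s+1)*(x+1-s)
        + (x+2)*(x+1)^2*(x+1-s)^2 := by
      have hid : x*(1-x-x^2)*(s+1)^2 + (x+1)*(2-x^2)*(s+1)*(x+1-s)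
          + (x+2)*(x+1)^2*(x+1-s)^2
          = (x-s)^2 * (1 + (x+1-s)*(x^2+4*x+3+s)) := by
        linear_combination (s^2 + x*s + 2*s + x^2*s - 7*x - 2*x^3 - 6*x^2 - 2) * hs2
      rw [hid]
      have h6 : 0 < x^2+4*x+3+s := by nlinarith
      have : 0 ≤ (x+1-s)*(x^2+4*x+3+s) := le_of_lt (mul_pos hd h6)
      nlinarith [sq_nonneg (x-s)]
    -- concave-chord argument, cleared of denominators
    have hA : x*(1-x-x^2) < 0 := by nlinarith
    have hC : 0 < (x+2)*(x+1)^2 := by positivity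
    -- identity : (s+1)*(x+1-s)*P(E) = (s+1-E*(x+1-s))*(x+1-s)*C + E*Poly + A*(s+1)*E*(E*(x+1-s)-(s+1))
    have hkey : (s+1)*(x+1-s)*(x*(1-x-x^2)*E^2 + (x+1)*(2-x^2)*E + (x+2)*(x+1)^2)
        = (s+1-E*(x+1-s))*((x+1-s)*((x+2)*(x+1)^2))
          + E*(x*(1-x-x^2)*(s+1)^2 + (x+1)*(2-x^2)*(s+1)*(x+1-s) + (x+2)*(x+1)^2*(x+1-s)^2)
          + (x*(1-x-x^2))*(s+1)*E*(E*(x+1-s)-(s+1)) := by ring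
    have hRHS : 0 < (s+1)*(x+1-s)*(x*(1-x-x^2)*E^2 + (x+1)*(2-x^2)*E + (x+2)*(x+1)^2) := by
      rw [hkey]
      have t1 : 0 < (s+1-E*(x+1-s))*((x+1-s)*((x+2)*(x+1)^2)) := by
        apply mul_pos (by linarith) (mul_pos hd hC)
      have t2 : 0 ≤ E*(x*(1-x-x^2)*(s+1)^2 + (x+1)*(2-x^2)*(s+1)*(x+1-s)
          + (x+2)*(x+1)^2*(x+1-s)^2) := mul_nonneg (le_of_lt hE) hPoly
      have t3 : 0 < (x*(1-x-x^2))*(s+1)*E*(E*(x+1-s)-(s+1)) := by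
        apply mul_pos_of_neg_of_neg _ (by linarith)
        apply mul_neg_of_neg_of_pos _ hE
        apply mul_neg_of_neg_of_pos hA (by linarith)
      linarith
    have hmul : 0 < (s+1)*(x+1-s) := mul_pos (by linarith) hd
    nlinarith [hRHS, hmul, mul_pos hmul hmul]

section B
variable {lam a : ℝ}

/-- derivative of `x ↦ wfun (zeta lam x) + wfun x` at `x > 0`. -/
lemma hasDerivAt_B (hlam : 0 < lam) {x : ℝ} (hx : 0 < x) :
    HasDerivAt (fun t => wfun (zeta lam t) + wfun t - 2 * wfun a)
      ((lam * Real.exp (-x) * (1 - x - x^2) / (x + 1)^2) * (1 + 1 / (zeta lam x + 1))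
        + (1 + 1 / (x + 1))) x := by
  have hx1 : x ≠ -1 := by linarith
  have hzpos : 0 < zeta lam x := zeta_pos hlam hx
  have hg := hasDerivAt_zeta (lam := lam) hx1
  have hlog : HasDerivAt (fun t => Real.log (zeta lam t + 1))
      ((lam * Real.exp (-x) * (1 - x - x^2) / (x + 1)^2) / (zeta lam x + 1)) x := by
    have := (hg.add_const 1).log (by linarith : zeta lam x + 1 ≠ 0)
    simpa using this
  have hwg : HasDerivAt (fun t => wfun (zeta lam t))
      ((lam * Real.exp (-x) * (1 - x - x^2) / (x + 1)^2) * (1 + 1 / (zeta lam x + 1))) x := by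
    have := hg.add hlog
    have heq : (lam * Real.exp (-x) * (1 - x - x^2) / (x + 1)^2)
        + (lam * Real.exp (-x) * (1 - x - x^2) / (x + 1)^2) / (zeta lam x + 1)
        = (lam * Real.exp (-x) * (1 - x - x^2) / (x + 1)^2) * (1 + 1 / (zeta lam x + 1)) := by
      field_simp
    rw [heq] at this
    exact this
  have hlogx : HasDerivAt (fun t : ℝ => Real.log (t + 1)) (1 / (x + 1)) x := by
    have := ((hasDerivAt_id x).add_const 1).log (by linarith : x + 1 ≠ 0)
    simpa using this
  have hwx : HasDerivAt wfun (1 + 1 / (x + 1)) x := (hasDerivAt_id x).add hlogx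
  exact (hwg.add hwx).sub_const (2 * wfun a)

/-- positivity of the derivative of B -/
lemma Bderiv_pos (hlam0 : 0 < lam)
    (hlam1 : lam < (Real.sqrt 2 + 1) * Real.exp (Real.sqrt 2)) {x : ℝ} (hx : 0 < x) :
    0 < (lam * Real.exp (-x) * (1 - x - x^2) / (x + 1)^2) * (1 + 1 / (zeta lam x + 1))
        + (1 + 1 / (x + 1)) := by
  set E := lam * Real.exp (-x) with hE
  have hEpos : 0 < E := by positivity
  have hEb : E < (Real.sqrt 2 + 1) * Real.exp (Real.sqrt 2 - x) := by
    rw [hE, Real.exp_sub]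
    rw [div_eq_mul_inv, ← Real.exp_neg]
    calc lam * Real.exp (-x) < ((Real.sqrt 2 + 1) * Real.exp (Real.sqrt 2)) * Real.exp (-x) :=
          mul_lt_mul_of_pos_right hlam1 (Real.exp_pos _)
      _ = (Real.sqrt 2 + 1) * (Real.exp (Real.sqrt 2) * Real.exp (-x)) := by ring
  have hq := quad_pos' hx hEpos hEb
  have hx1 : (0:ℝ) < x + 1 := by linarith
  have hzx : zeta lam x = x * E / (x + 1) := by unfold zeta; rw [hE]; ring_nf
  have hz1 : zeta lam x + 1 = (x * E + x + 1) / (x + 1) := by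
    rw [hzx]; field_simp; ring
  have hden : 0 < x * E + x + 1 := by positivity
  rw [hz1]
  have key : (E * (1 - x - x^2) / (x + 1)^2) * (1 + (x+1)/(x * E + x + 1)) + (1 + 1/(x+1))
      = (x*(1-x-x^2)*E^2 + (x+1)*(2-x^2)*E + (x+2)*(x+1)^2) / ((x+1)^2 * (x * E + x + 1)) := by
    field_simp
    ring
  have h1div : 1 / ((x * E + x + 1) / (x + 1)) = (x + 1) / (x * E + x + 1) := by
    rw [one_div_div]
  rw [h1div, key]
  positivity
end B

lemma wfun_lt_wfun {u v : ℝ} (hu : -1 < u) (huv : u < v) : wfun u < wfun v := by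
  unfold wfun
  have : Real.log (u + 1) < Real.log (v + 1) :=
    Real.log_lt_log (by linarith) (by linarith)
  linarith

lemma le_wfun {t : ℝ} (ht : 0 ≤ t) : t ≤ wfun t := by
  unfold wfun
  have : 0 ≤ Real.log (t + 1) := Real.log_nonneg (by linarith)
  linarith

lemma continuousAt_wfun {t : ℝ} (ht : -1 < t) : ContinuousAt wfun t := by
  unfold wfun
  apply ContinuousAt.add continuousAt_id
  exact (Real.continuousAt_log (by linarith)).comp (continuousAt_id.add continuousAt_const)

section B2
variable {lam a : ℝ}

lemma B_strictMono (hlam0 : 0 < lam)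
    (hlam1 : lam < (Real.sqrt 2 + 1) * Real.exp (Real.sqrt 2)) :
    StrictMonoOn (fun t => wfun (zeta lam t) + wfun t - 2 * wfun a) (Set.Ioi (0:ℝ)) := by
  apply strictMonoOn_of_deriv_pos (convex_Ioi 0)
  · intro t ht
    exact (hasDerivAt_B (a := a) hlam0 ht).continuousAt.continuousWithinAt
  · intro t ht
    rw [interior_Ioi] at ht
    rw [(hasDerivAt_B (a := a) hlam0 ht).deriv]
    exact Bderiv_pos hlam0 hlam1 ht

lemma Vstep (hlam0 : 0 < lam)
    (hlam1 : lam < (Real.sqrt 2 + 1) * Real.exp (Real.sqrt 2))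
    (ha : 0 < a) (hfix : zeta lam a = a) {z : ℝ} (hz : 0 < z) (hne : z ≠ a) :
    |wfun (zeta lam z) - wfun a| < |wfun z - wfun a| := by
  have hBa : wfun (zeta lam a) + wfun a - 2 * wfun a = 0 := by rw [hfix]; ring
  have hzpos := zeta_pos hlam0 hz
  rcases lt_or_gt_of_ne hne with hlt | hgt
  · -- z < a
    have hBz : wfun (zeta lam z) + wfun z - 2 * wfun a < 0 := by
      have := B_strictMono (a := a) hlam0 hlam1 (Set.mem_Ioi.mpr hz) (Set.mem_Ioi.mpr ha) hlt
      simp only at this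
      linarith [this, hBa]
    have hgz : z < zeta lam z := lt_zeta ha hfix hz hlt
    have hw1 : wfun z < wfun (zeta lam z) := wfun_lt_wfun (by linarith) hgz
    have hw2 : wfun z < wfun a := wfun_lt_wfun (by linarith) hlt
    rw [abs_of_neg (by linarith : wfun z - wfun a < 0)]
    rw [abs_lt]
    constructor <;> linarith
  · -- a < z
    have hBz : 0 < wfun (zeta lam z) + wfun z - 2 * wfun a := by
      have := B_strictMono (a := a) hlam0 hlam1 (Set.mem_Ioi.mpr ha) (Set.mem_Ioi.mpr hz) hgt
      simp only at this
      linarith [this, hBa]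
    have hgz : zeta lam z < z := zeta_lt ha hfix hgt
    have hw1 : wfun (zeta lam z) < wfun z := wfun_lt_wfun (by linarith) hgz
    have hw2 : wfun a < wfun z := wfun_lt_wfun (by linarith) hgt
    rw [abs_of_pos (by linarith : 0 < wfun z - wfun a)]
    rw [abs_lt]
    constructor <;> linarith
end B2

theorem conv_of_pos {lam a : ℝ} (hlam0 : 1 < lam)
    (hlam1 : lam < (Real.sqrt 2 + 1) * Real.exp (Real.sqrt 2))
    (ha : a ∈ Set.Ioo (0 : ℝ) (Real.sqrt 2)) (hfix : zeta lam a = a)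
    {y : ℝ} (hy : 0 < y) :
    Tendsto (fun n : ℕ => (zeta lam)^[n] y) atTop (nhds a) := by
  have hl0 : 0 < lam := by linarith
  have hap : 0 < a := ha.1
  set X : ℕ → ℝ := fun n => (zeta lam)^[n] y with hX
  have hXs : ∀ n, X (n+1) = zeta lam (X n) := fun n => Function.iterate_succ_apply' _ _ _
  have hXpos : ∀ n, 0 < X n := by
    intro n
    induction n with
    | zero => simpa [hX] using hy
    | succ n ih => rw [hXs]; exact zeta_pos hl0 ih
  by_cases hex : ∃ N, X N = a
  · obtain ⟨N, hN⟩ := hex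
    have hconst : ∀ n ≥ N, X n = a := by
      intro n hn
      induction n, hn using Nat.le_induction with
      | base => exact hN
      | succ n hn ih => rw [hXs, ih, hfix]
    exact tendsto_atTop_of_eventually_const hconst
  · push_neg at hex
    set d : ℕ → ℝ := fun n => |wfun (X n) - wfun a| with hdD
    have hd : ∀ n, d (n+1) < d n := by
      intro n
      show |wfun (X (n+1)) - wfun a| < |wfun (X n) - wfun a|
      rw [hXs]
      exact Vstep hl0 hlam1 hap hfix (hXpos n) (hex n)
    have hant : Antitone d := antitone_nat_of_succ_le fun n => (hd n).le
    have hdnn : ∀ n, 0 ≤ d n := fun n => abs_nonneg _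
    set U : ℝ := wfun a + d 0 with hU
    have hub : ∀ n, X n ≤ U := by
      intro n
      have h1 : X n ≤ wfun (X n) := le_wfun (hXpos n).le
      have h2 : wfun (X n) - wfun a ≤ d n := le_abs_self _
      have h3 : d n ≤ d 0 := hant (Nat.zero_le n)
      rw [hU]; linarith
    have hUa : a ≤ U := by
      have := le_wfun hap.le
      have := hdnn 0
      rw [hU]; linarith
    have contg : ContinuousOn (zeta lam) (Set.Icc a U) := by
      intro z hz
      have : z ≠ -1 := by have := hz.1; intro h; rw [h] at this; linarith
      exact (continuousAt_zeta this).continuousWithinAt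
    obtain ⟨z0, hz0mem, hz0min⟩ :=
      isCompact_Icc.exists_isMinOn ⟨a, Set.mem_Icc.mpr ⟨le_refl a, hUa⟩⟩ contg
    have hm2 : 0 < zeta lam z0 := zeta_pos hl0 (lt_of_lt_of_le hap hz0mem.1)
    set L : ℝ := min (X 0) (zeta lam z0) with hL
    have hLpos : 0 < L := lt_min (hXpos 0) hm2
    have hlb : ∀ n, L ≤ X n := by
      intro n
      induction n with
      | zero => exact min_le_left _ _
      | succ n ih =>
        rw [hXs]
        rcases le_or_gt (X n) a with h | h
        · exact le_trans ih (le_zeta hap hfix (hXpos n) h)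
        · have hmem : X n ∈ Set.Icc a U := Set.mem_Icc.mpr ⟨h.le, hub n⟩
          have := isMinOn_iff.mp hz0min _ hmem
          exact le_trans (min_le_right _ _) this
    by_contra hcon
    rw [Metric.tendsto_atTop] at hcon
    push_neg at hcon
    obtain ⟨ε, hε, hfr⟩ := hcon
    have hfreq : ∃ᶠ n in atTop, ε ≤ dist (X n) a := by
      rw [Filter.frequently_atTop]
      intro N; obtain ⟨n, hn, h⟩ := hfr N; exact ⟨n, hn, h⟩
    obtain ⟨φ, hφmono, hφ⟩ := Filter.extraction_of_frequently_atTop hfreq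
    have hmem : ∀ k, X (φ k) ∈ Set.Icc L U := fun k => ⟨hlb _, hub _⟩
    obtain ⟨y0, hy0mem, ψ, hψ, hconv⟩ := isCompact_Icc.tendsto_subseq hmem
    have hy0pos : 0 < y0 := lt_of_lt_of_le hLpos hy0mem.1
    have hconv' : Tendsto (fun k => X (φ (ψ k))) atTop (𝓝 y0) := hconv
    have hy0ne : y0 ≠ a := by
      have hdist : Tendsto (fun k => dist (X (φ (ψ k))) a) atTop (𝓝 (dist y0 a)) :=
        hconv'.dist tendsto_const_nhds
      have hge : ε ≤ dist y0 a :=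
        ge_of_tendsto hdist (Filter.Eventually.of_forall fun k => hφ (ψ k))
      intro h
      rw [h] at hge
      simp at hge
      linarith
    have hbdd : BddBelow (Set.range d) := by
      refine ⟨0, ?_⟩
      rintro _ ⟨n, rfl⟩
      exact hdnn n
    have dlim : Tendsto d atTop (𝓝 (⨅ n, d n)) := tendsto_atTop_ciInf hant hbdd
    set I : ℝ := ⨅ n, d n with hI
    set σ : ℕ → ℕ := fun k => φ (ψ k) with hσD
    have hσ : StrictMono σ := hφmono.comp hψ
    have h1 : Tendsto (fun k => d (σ k)) atTop (𝓝 I) := dlim.comp hσ.tendsto_atTop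
    have hcF : ContinuousAt (fun z => |wfun z - wfun a|) y0 :=
      (((continuousAt_wfun (by linarith)).sub continuousAt_const).abs)
    have h2 : Tendsto (fun k => d (σ k)) atTop (𝓝 (|wfun y0 - wfun a|)) :=
      hcF.tendsto.comp hconv'
    have hI1 : |wfun y0 - wfun a| = I := tendsto_nhds_unique h2 h1
    have hσ1 : StrictMono (fun k => σ k + 1) := fun i j h => by
      simpa using Nat.add_lt_add_right (hσ h) 1
    have h3 : Tendsto (fun k => d (σ k + 1)) atTop (𝓝 I) := dlim.comp hσ1.tendsto_atTop
    have hcz : ContinuousAt (fun z => |wfun (zeta lam z) - wfun a|) y0 := by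
      have hz0 : ContinuousAt (zeta lam) y0 := continuousAt_zeta (by linarith)
      have : ContinuousAt (fun z => |wfun z - wfun a|) (zeta lam y0) :=
        (((continuousAt_wfun (by linarith [zeta_pos hl0 hy0pos])).sub continuousAt_const).abs)
      exact this.comp hz0
    have h4 : Tendsto (fun k => d (σ k + 1)) atTop (𝓝 (|wfun (zeta lam y0) - wfun a|)) := by
      have heq : (fun k => d (σ k + 1)) = (fun z => |wfun (zeta lam z) - wfun a|) ∘ (fun k => X (σ k)) := by
        funext k
        simp only [Function.comp_apply, hdD, hXs]
      rw [heq]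
      exact hcz.tendsto.comp hconv'
    have hI2 : |wfun (zeta lam y0) - wfun a| = I := tendsto_nhds_unique h4 h3
    have := Vstep hl0 hlam1 hap hfix hy0pos hy0ne
    rw [hI1, hI2] at this
    exact lt_irrefl I this

theorem iterates_tendsto_attracting_fixed_point (lam : ℝ) (hlam0 : 1 < lam)
    (hlam1 : lam < (Real.sqrt 2 + 1) * Real.exp (Real.sqrt 2))
    (a : ℝ) (ha : a ∈ Set.Ioo (0 : ℝ) (Real.sqrt 2)) (hfix : zeta lam a = a) :
    ∀ x : ℝ, x < -1 ∨ 0 < x →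
      Tendsto (fun n : ℕ => (zeta lam)^[n] x) atTop (nhds a) := by
  intro x hx
  have hl0 : 0 < lam := by linarith
  have hx1 : 0 < zeta lam x := by
    rcases hx with h | h
    · exact zeta_pos' hl0 h
    · exact zeta_pos hl0 h
  have hmain := conv_of_pos hlam0 hlam1 ha hfix hx1
  have h2 : Tendsto (fun n : ℕ => (zeta lam)^[n + 1] x) atTop (nhds a) := by
    have heq : (fun n : ℕ => (zeta lam)^[n + 1] x) = fun n : ℕ => (zeta lam)^[n] (zeta lam x) := by
      funext n
      exact Function.iterate_succ_apply _ _ _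
    rw [heq]
    exact hmain
  exact (Filter.tendsto_add_atTop_iff_nat 1).mp h2
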